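/- Let L > 0, ν ≥ 0, let a ∈ ℝ³ with ‖a‖₂ = 1, and let λ ∈ ℂ. Suppose v : ℝ → ℂ³ is twice continuously differentiable, not identically zero on [0,L], satisfies λ v(x) = ν v''(x) + a × v''(x) for all x ∈ [0,L] (where × is the cross product on ℂ³ and a is regarded as a vector in ℂ³ with real entries), and satisfies v'(0) = v'(L) = 0. Then Re λ ≤ 0. (The stability content of the paper's Theorem 2.4: all eigenvalues of the Landau–Lifshitz operator linearized at the equilibrium a have nonpositive real part.) -/

import Mathlib

/-- Cross product on `ℂ³ = EuclideanSpace ℂ (Fin 3)`. -/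
noncomputable def cross3C (u v : EuclideanSpace ℂ (Fin 3)) : EuclideanSpace ℂ (Fin 3) :=
  (WithLp.equiv 2 (Fin 3 → ℂ)).symm
    ![u 1 * v 2 - u 2 * v 1, u 2 * v 0 - u 0 * v 2, u 0 * v 1 - u 1 * v 0]

open scoped InnerProductSpace ComplexConjugate
open MeasureTheory intervalIntegral

lemma cross3C_apply (u v : EuclideanSpace ℂ (Fin 3)) (i : Fin 3) :
    cross3C u v i = ![u 1 * v 2 - u 2 * v 1, u 2 * v 0 - u 0 * v 2, u 0 * v 1 - u 1 * v 0] i := rfl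

/-- `cross3C a` as a continuous linear map. -/
noncomputable def crossCLM (a : EuclideanSpace ℂ (Fin 3)) :
    EuclideanSpace ℂ (Fin 3) →L[ℂ] EuclideanSpace ℂ (Fin 3) :=
  LinearMap.toContinuousLinearMap
  { toFun := cross3C a
    map_add' := by
      intro x y; ext i; fin_cases i <;>
        simp [cross3C_apply, PiLp.add_apply] <;> ring
    map_smul' := by
      intro c x; ext i; fin_cases i <;>
        simp [cross3C_apply, PiLp.smul_apply, smul_eq_mul] <;> ring }

lemma crossCLM_apply (a w : EuclideanSpace ℂ (Fin 3)) : crossCLM a w = cross3C a w := rfl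

lemma re_inner_cross (a : EuclideanSpace ℂ (Fin 3)) (ha : ∀ i, (a i).im = 0)
    (w : EuclideanSpace ℂ (Fin 3)) :
    (⟪w, cross3C a w⟫_ℂ).re = 0 := by
  simp only [PiLp.inner_apply, RCLike.inner_apply, Fin.sum_univ_three, cross3C_apply]
  simp only [Matrix.cons_val_zero, Matrix.cons_val_one, Matrix.head_cons,
    Matrix.cons_val_two, Matrix.tail_cons]
  simp only [Complex.add_re, Complex.mul_re, Complex.sub_re, Complex.sub_im,
    Complex.mul_im, Complex.conj_re, Complex.conj_im, ha]
  ring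

lemma re_intervalIntegral (a b : ℝ) (f : ℝ → ℂ) (hf : IntervalIntegrable f volume a b) :
    (∫ x in a..b, f x).re = ∫ x in a..b, (f x).re := by
  simp only [intervalIntegral]
  rw [Complex.sub_re]
  have h1 := integral_re hf.1
  have h2 := integral_re hf.2
  simp only [RCLike.re_to_complex] at h1 h2
  rw [← h1, ← h2]


/-- Every eigenvalue `λ` of the Landau–Lifshitz operator linearized at
an equilibrium `a` (with `‖a‖ = 1`, regarded as a vector of `ℂ³` with real entries),
namely `λ v = ν v'' + a × v''` with Neumann boundary conditions `v'(0) = v'(L) = 0`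
and `v` not identically zero on `[0, L]`, has nonpositive real part. -/
theorem linearized_landau_lifshitz_eigenvalues_nonpositive
    (L ν : ℝ) (hL : 0 < L) (hν : 0 ≤ ν)
    (a : EuclideanSpace ℂ (Fin 3)) (ha_real : ∀ i, (a i).im = 0) (ha : ‖a‖ = 1)
    (lam : ℂ) (v : ℝ → EuclideanSpace ℂ (Fin 3))
    (hv : ContDiff ℝ 2 v)
    (hne : ∃ x ∈ Set.Icc (0 : ℝ) L, v x ≠ 0)
    (heig : ∀ x ∈ Set.Icc (0 : ℝ) L,
      lam • v x = (ν : ℂ) • deriv (deriv v) x + cross3C a (deriv (deriv v) x))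
    (hbc0 : deriv v 0 = 0) (hbcL : deriv v L = 0) :
    lam.re ≤ 0 := by
  -- regularity facts
  have hv2 : ContDiff ℝ ((1 : ℕ) + 1) v := by exact_mod_cast hv
  rw [contDiff_succ_iff_deriv] at hv2
  obtain ⟨hdiff, -, hv1⟩ := hv2
  have hv1' : ContDiff ℝ 1 (deriv v) := by exact_mod_cast hv1
  rw [contDiff_one_iff_deriv] at hv1'
  obtain ⟨hdiff1, hcont2⟩ := hv1'
  have hd : ∀ x : ℝ, HasDerivAt v (deriv v x) x := fun x => (hdiff x).hasDerivAt
  have hd1 : ∀ x : ℝ, HasDerivAt (deriv v) (deriv (deriv v) x) x :=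
    fun x => (hdiff1 x).hasDerivAt
  have hc0 : Continuous v := hdiff.continuous
  have hc1 : Continuous (deriv v) := hdiff1.continuous
  -- continuity of integrands
  have c_vv : Continuous fun x => ⟪v x, v x⟫_ℂ := hc0.inner hc0
  have c_v'v' : Continuous fun x => ⟪deriv v x, deriv v x⟫_ℂ := hc1.inner hc1
  have c_vv'' : Continuous fun x => ⟪v x, deriv (deriv v) x⟫_ℂ := hc0.inner hcont2
  have c_cross' : Continuous fun x => crossCLM a (deriv v x) :=
    (crossCLM a).continuous.comp hc1
  have c_cross'' : Continuous fun x => crossCLM a (deriv (deriv v) x) :=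
    (crossCLM a).continuous.comp hcont2
  have c_K : Continuous fun x => ⟪deriv v x, crossCLM a (deriv v x)⟫_ℂ := hc1.inner c_cross'
  have c_vX : Continuous fun x => ⟪v x, crossCLM a (deriv (deriv v) x)⟫_ℂ := hc0.inner c_cross''
  -- integration by parts 1 : ∫ ⟪v, v''⟫ = -∫ ⟪v', v'⟫
  have ibp1 : (∫ x in (0:ℝ)..L, ⟪v x, deriv (deriv v) x⟫_ℂ)
      = -∫ x in (0:ℝ)..L, ⟪deriv v x, deriv v x⟫_ℂ := by
    have hG : ∀ x ∈ Set.uIcc (0:ℝ) L,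
        HasDerivAt (fun t => ⟪v t, deriv v t⟫_ℂ)
          (⟪v x, deriv (deriv v) x⟫_ℂ + ⟪deriv v x, deriv v x⟫_ℂ) x :=
      fun x _ => (hd x).inner ℂ (hd1 x)
    have hint : IntervalIntegrable
        (fun x => ⟪v x, deriv (deriv v) x⟫_ℂ + ⟪deriv v x, deriv v x⟫_ℂ) volume 0 L :=
      (c_vv''.add c_v'v').intervalIntegrable _ _
    have := intervalIntegral.integral_eq_sub_of_hasDerivAt hG hint
    rw [hbc0, hbcL] at this
    simp only [inner_zero_right, sub_zero, sub_self] at this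
    rw [intervalIntegral.integral_add (c_vv''.intervalIntegrable _ _)
      (c_v'v'.intervalIntegrable _ _)] at this
    exact eq_neg_of_add_eq_zero_left this
  -- integration by parts 2 : ∫ ⟪v, a × v''⟫ = -∫ ⟪v', a × v'⟫
  have ibp2 : (∫ x in (0:ℝ)..L, ⟪v x, crossCLM a (deriv (deriv v) x)⟫_ℂ)
      = -∫ x in (0:ℝ)..L, ⟪deriv v x, crossCLM a (deriv v x)⟫_ℂ := by
    have hH : ∀ x ∈ Set.uIcc (0:ℝ) L,
        HasDerivAt (fun t => ⟪v t, crossCLM a (deriv v t)⟫_ℂ)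
          (⟪v x, crossCLM a (deriv (deriv v) x)⟫_ℂ + ⟪deriv v x, crossCLM a (deriv v x)⟫_ℂ) x :=
      fun x _ => by
        have hcd0 := (((crossCLM a).restrictScalars ℝ).hasFDerivAt
          (x := deriv v x)).comp_hasDerivAt x (hd1 x)
        simpa [Function.comp] using (hd x).inner ℂ hcd0
    have hint : IntervalIntegrable
        (fun x => ⟪v x, crossCLM a (deriv (deriv v) x)⟫_ℂ
          + ⟪deriv v x, crossCLM a (deriv v x)⟫_ℂ) volume 0 L :=
      (c_vX.add c_K).intervalIntegrable _ _
    have := intervalIntegral.integral_eq_sub_of_hasDerivAt hH hint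
    rw [hbc0, hbcL] at this
    simp only [map_zero, inner_zero_right, sub_zero, sub_self] at this
    rw [intervalIntegral.integral_add (c_vX.intervalIntegrable _ _)
      (c_K.intervalIntegrable _ _)] at this
    exact eq_neg_of_add_eq_zero_left this
  -- the three key integrals
  have hIc : (∫ x in (0:ℝ)..L, ⟪v x, v x⟫_ℂ)
      = ((∫ x in (0:ℝ)..L, ‖v x‖^2 : ℝ) : ℂ) := by
    have hco : ∫ x in (0:ℝ)..L, ((‖v x‖^2 : ℝ) : ℂ)
        = ((∫ x in (0:ℝ)..L, ‖v x‖^2 : ℝ) : ℂ) := by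
      have h := RCLike.intervalIntegral_ofReal (𝕜 := ℂ) (f := fun x => ‖v x‖^2)
        (a := 0) (b := L) (μ := volume)
      exact_mod_cast h
    rw [← hco]
    apply intervalIntegral.integral_congr
    intro x _
    dsimp only
    rw [inner_self_eq_norm_sq_to_K]
    push_cast
    rfl
  have hJc : (∫ x in (0:ℝ)..L, ⟪deriv v x, deriv v x⟫_ℂ)
      = ((∫ x in (0:ℝ)..L, ‖deriv v x‖^2 : ℝ) : ℂ) := by
    have hco : ∫ x in (0:ℝ)..L, ((‖deriv v x‖^2 : ℝ) : ℂ)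
        = ((∫ x in (0:ℝ)..L, ‖deriv v x‖^2 : ℝ) : ℂ) := by
      have h := RCLike.intervalIntegral_ofReal (𝕜 := ℂ) (f := fun x => ‖deriv v x‖^2)
        (a := 0) (b := L) (μ := volume)
      exact_mod_cast h
    rw [← hco]
    apply intervalIntegral.integral_congr
    intro x _
    dsimp only
    rw [inner_self_eq_norm_sq_to_K]
    push_cast
    rfl
  set I : ℝ := ∫ x in (0:ℝ)..L, ‖v x‖^2 with hI
  set J : ℝ := ∫ x in (0:ℝ)..L, ‖deriv v x‖^2 with hJ
  set K : ℂ := ∫ x in (0:ℝ)..L, ⟪deriv v x, crossCLM a (deriv v x)⟫_ℂ with hK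
  -- the eigenvalue identity integrated over [0, L]
  have key : lam * (I:ℂ) = (ν:ℂ) * (-(J:ℂ)) + (-K) := by
    have h1 : (∫ x in (0:ℝ)..L, ⟪v x, lam • v x⟫_ℂ)
        = ∫ x in (0:ℝ)..L,
            ⟪v x, (ν:ℂ) • deriv (deriv v) x + crossCLM a (deriv (deriv v) x)⟫_ℂ := by
      apply intervalIntegral.integral_congr
      intro x hx
      rw [Set.uIcc_of_le hL.le] at hx
      dsimp only
      rw [heig x hx, crossCLM_apply]
    have lhs : (∫ x in (0:ℝ)..L, ⟪v x, lam • v x⟫_ℂ) = lam * (I:ℂ) := by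
      simp only [inner_smul_right]
      rw [intervalIntegral.integral_const_mul, hIc]
    have rhs : (∫ x in (0:ℝ)..L,
          ⟪v x, (ν:ℂ) • deriv (deriv v) x + crossCLM a (deriv (deriv v) x)⟫_ℂ)
        = (ν:ℂ) * (-(J:ℂ)) + (-K) := by
      simp only [inner_add_right, inner_smul_right]
      rw [intervalIntegral.integral_add
        ((show Continuous fun x => (ν:ℂ) * ⟪v x, deriv (deriv v) x⟫_ℂ from
          continuous_const.mul c_vv'').intervalIntegrable _ _) (c_vX.intervalIntegrable _ _),
        intervalIntegral.integral_const_mul, ibp1, hJc, ibp2]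
    rw [← lhs, h1, rhs]
  -- K is purely imaginary
  have hKre : K.re = 0 := by
    rw [hK, re_intervalIntegral _ _ _ (c_K.intervalIntegrable _ _)]
    have h0 : ∀ x : ℝ, (⟪deriv v x, crossCLM a (deriv v x)⟫_ℂ).re = 0 := fun x =>
      re_inner_cross a ha_real _
    simp only [h0]
    simp
  -- positivity of I, nonnegativity of J
  have hIpos : 0 < I := by
    obtain ⟨x₀, hx₀, hvx₀⟩ := hne
    refine intervalIntegral.integral_pos hL ((hc0.norm.pow 2).continuousOn) ?_ ?_
    · intro x _; positivity
    · exact ⟨x₀, hx₀, pow_pos (norm_pos_iff.mpr hvx₀) 2⟩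
  have hJnn : 0 ≤ J :=
    intervalIntegral.integral_nonneg hL.le (fun x _ => sq_nonneg _)
  -- conclude
  have hre : lam.re * I = -(ν * J) := by
    have h := congrArg Complex.re key
    simp only [Complex.mul_re, Complex.add_re, Complex.neg_re, Complex.ofReal_re,
      Complex.ofReal_im, hKre, mul_zero, sub_zero, neg_zero, add_zero] at h
    linarith
  nlinarith [mul_nonneg hν hJnn]
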